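/- Ratio consensus for the generation algorithm: if G is connected and z0, w0 : Fin n → ℝ satisfy ∑ j, w0 j ≠ 0, then for every vertex i the limits z∞ i = lim_{t→∞} (M^t z0) i and w∞ i = lim_{t→∞} (M^t w0) i exist with w∞ i ≠ 0, and z∞ i / w∞ i = (∑ j, z0 j) / (∑ j, w0 j); in particular this ratio is the same for all vertices i. -/

import Mathlib

open Filter Topology

-- nonneg and column sums of powers
lemma pow_facts (n : ℕ) (M : Matrix (Fin n) (Fin n) ℝ)
    (hnn : ∀ i j, 0 ≤ M i j) (hcol : ∀ j, ∑ i, M i j = 1) :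
    ∀ t : ℕ, (∀ i j, 0 ≤ (M ^ t) i j) ∧ (∀ j, ∑ i, (M ^ t) i j = 1) := by
  intro t
  induction t with
  | zero =>
    constructor
    · intro i j
      by_cases h : i = j <;> simp [Matrix.one_apply, h]
    · intro j
      simp [Matrix.one_apply]
  | succ t ih =>
    rw [pow_succ]
    constructor
    · intro i j
      rw [Matrix.mul_apply]
      exact Finset.sum_nonneg fun k _ => mul_nonneg (ih.1 i k) (hnn k j)
    · intro j
      simp only [Matrix.mul_apply]
      rw [Finset.sum_comm]
      have : ∀ k, ∑ i, (M ^ t) i k * M k j = M k j := by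
        intro k
        rw [← Finset.sum_mul, ih.2 k, one_mul]
      simp only [this]
      exact hcol j

lemma pow_nonneg' (n : ℕ) (M : Matrix (Fin n) (Fin n) ℝ)
    (hnn : ∀ i j, 0 ≤ M i j) : ∀ t : ℕ, ∀ i j, 0 ≤ (M ^ t) i j := by
  intro t
  induction t with
  | zero => intro i j; by_cases h : i = j <;> simp [Matrix.one_apply, h]
  | succ t ih =>
    intro i j
    rw [pow_succ, Matrix.mul_apply]
    exact Finset.sum_nonneg fun k _ => mul_nonneg (ih i k) (hnn k j)

lemma pow_entry_pos (n : ℕ) (M : Matrix (Fin n) (Fin n) ℝ)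
    (hnn : ∀ i j, 0 ≤ M i j) (G : SimpleGraph (Fin n)) [DecidableRel G.Adj]
    (hdiag : ∀ i, 0 < M i i) (hadj : ∀ i j, G.Adj i j → 0 < M i j) :
    ∀ t : ℕ, ∀ i j : Fin n, ∀ w : G.Walk i j, w.length ≤ t → 0 < (M ^ t) i j := by
  intro t
  induction t with
  | zero =>
    intro i j w hw
    have : i = j := w.eq_of_length_eq_zero (Nat.le_zero.mp hw)
    subst this
    simp [hdiag i]
  | succ t ih =>
    intro i j w hw
    rw [pow_succ']
    rw [Matrix.mul_apply]
    have hterm : ∃ k, 0 < M i k * (M ^ t) k j := by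
      cases w with
      | nil =>
        exact ⟨i, mul_pos (hdiag i) (ih i i SimpleGraph.Walk.nil (Nat.zero_le t))⟩
      | cons h w' =>
        rename_i k
        refine ⟨k, mul_pos (hadj i k h) (ih k j w' ?_)⟩
        simpa [SimpleGraph.Walk.length_cons] using hw
    obtain ⟨k, hk⟩ := hterm
    have hle : M i k * (M ^ t) k j ≤ ∑ l, M i l * (M ^ t) l j :=
      Finset.single_le_sum (f := fun l => M i l * (M ^ t) l j)
        (fun l _ => mul_nonneg (hnn i l) (pow_nonneg' n M hnn t l j)) (Finset.mem_univ k)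
    exact lt_of_lt_of_le hk hle

lemma key_conv (n : ℕ) (hn : 1 ≤ n) (M : Matrix (Fin n) (Fin n) ℝ)
    (hnn : ∀ i j, 0 ≤ M i j) (hcol : ∀ j, ∑ i, M i j = 1)
    (hpos : ∀ i j, 0 < (M ^ n) i j) (i : Fin n) :
    ∃ p : ℝ, 0 < p ∧ ∀ j, Tendsto (fun t => (M ^ t) i j) atTop (𝓝 p) := by
  have pf := pow_facts n M hnn hcol
  have hne : (Finset.univ : Finset (Fin n)).Nonempty := ⟨⟨0, hn⟩, Finset.mem_univ _⟩
  set u : ℕ → Fin n → ℝ := fun t j => (M ^ t) i j with hu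
  set S : ℕ → ℝ := fun t => Finset.univ.sup' hne (u t) with hS
  set I : ℕ → ℝ := fun t => Finset.univ.inf' hne (u t) with hI
  have step : ∀ t s j, u (t + s) j = ∑ k, u t k * (M ^ s) k j := by
    intro t s j
    simp only [hu, pow_add, Matrix.mul_apply]
  have hub : ∀ t s j, u (t + s) j ≤ S t := by
    intro t s j
    rw [step]
    calc ∑ k, u t k * (M ^ s) k j ≤ ∑ k, S t * (M ^ s) k j := by
          refine Finset.sum_le_sum fun k _ => ?_
          exact mul_le_mul_of_nonneg_right (Finset.le_sup' (u t) (Finset.mem_univ k))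
            (pow_nonneg' n M hnn s k j)
      _ = S t := by rw [← Finset.mul_sum, (pf s).2 j, mul_one]
  have hlb : ∀ t s j, I t ≤ u (t + s) j := by
    intro t s j
    rw [step]
    calc I t = ∑ k, I t * (M ^ s) k j := by rw [← Finset.mul_sum, (pf s).2 j, mul_one]
      _ ≤ ∑ k, u t k * (M ^ s) k j := by
          refine Finset.sum_le_sum fun k _ => ?_
          exact mul_le_mul_of_nonneg_right (Finset.inf'_le (u t) (Finset.mem_univ k))
            (pow_nonneg' n M hnn s k j)
  have hSa : ∀ t s, S (t + s) ≤ S t := fun t s =>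
    Finset.sup'_le hne (u (t + s)) fun j _ => hub t s j
  have hIa : ∀ t s, I t ≤ I (t + s) := fun t s =>
    Finset.le_inf' hne (u (t + s)) fun j _ => hlb t s j
  have hIS : ∀ t, I t ≤ S t := fun t =>
    le_trans (Finset.inf'_le (u t) (Finset.mem_univ ⟨0, hn⟩))
      (Finset.le_sup' (u t) (Finset.mem_univ ⟨0, hn⟩))
  have hSanti : Antitone S := by
    intro a b hab
    obtain ⟨s, rfl⟩ := Nat.exists_eq_add_of_le hab
    exact hSa a s
  have hImono : Monotone I := by
    intro a b hab
    obtain ⟨s, rfl⟩ := Nat.exists_eq_add_of_le hab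
    exact hIa a s
  have hSbdd : BddBelow (Set.range S) := by
    refine ⟨I 0, ?_⟩
    rintro x ⟨t, rfl⟩
    exact le_trans (hImono (Nat.zero_le t)) (hIS t)
  have hIbdd : BddAbove (Set.range I) := by
    refine ⟨S 0, ?_⟩
    rintro x ⟨t, rfl⟩
    exact le_trans (hIS t) (hSanti (Nat.zero_le t))
  have hStend : Tendsto S atTop (𝓝 (⨅ t, S t)) := tendsto_atTop_ciInf hSanti hSbdd
  have hItend : Tendsto I atTop (𝓝 (⨆ t, I t)) := tendsto_atTop_ciSup hImono hIbdd
  -- epsilon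
  have hne2 : (Finset.univ : Finset (Fin n × Fin n)).Nonempty :=
    ⟨(⟨0, hn⟩, ⟨0, hn⟩), Finset.mem_univ _⟩
  set ε : ℝ := Finset.univ.inf' hne2 (fun p : Fin n × Fin n => (M ^ n) p.1 p.2) with hε
  have hεpos : 0 < ε := by
    rw [hε, Finset.lt_inf'_iff]
    exact fun p _ => hpos p.1 p.2
  have hεle : ∀ k j, ε ≤ (M ^ n) k j := fun k j =>
    Finset.inf'_le _ (Finset.mem_univ (k, j))
  have hsub : ∀ j : Fin n, ∑ k, ((M ^ n) k j - ε) = 1 - n * ε := by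
    intro j
    rw [Finset.sum_sub_distrib, (pf n).2 j]
    simp [Finset.card_univ, mul_comm]
  set c : ℝ := 1 - n * ε with hc
  have hc0 : 0 ≤ c := by
    have := hsub ⟨0, hn⟩
    have h2 : (0:ℝ) ≤ ∑ k, ((M ^ n) k ⟨0, hn⟩ - ε) :=
      Finset.sum_nonneg fun k _ => sub_nonneg.mpr (hεle k _)
    linarith
  have hc1 : c < 1 := by
    have : (0:ℝ) < n * ε := by
      have : (1:ℝ) ≤ n := by exact_mod_cast hn
      nlinarith
    simp only [hc]; linarith
  -- contraction
  have contr : ∀ t, S (t + n) - I (t + n) ≤ c * (S t - I t) := by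
    intro t
    obtain ⟨j0, _, hj0⟩ := Finset.exists_mem_eq_sup' hne (u (t + n))
    obtain ⟨l0, _, hl0⟩ := Finset.exists_mem_eq_inf' hne (u (t + n))
    have key1 : ∀ j, u (t + n) j
        = (∑ k, u t k * ((M ^ n) k j - ε)) + ε * ∑ k, u t k := by
      intro j
      rw [step]
      rw [Finset.mul_sum]
      rw [← Finset.sum_add_distrib]
      congr 1; funext k; ring
    have upper : ∀ j, ∑ k, u t k * ((M ^ n) k j - ε) ≤ S t * (1 - n * ε) := by
      intro j
      calc ∑ k, u t k * ((M ^ n) k j - ε) ≤ ∑ k, S t * ((M ^ n) k j - ε) := by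
            refine Finset.sum_le_sum fun k _ => ?_
            exact mul_le_mul_of_nonneg_right (Finset.le_sup' (u t) (Finset.mem_univ k))
              (sub_nonneg.mpr (hεle k j))
        _ = S t * (1 - n * ε) := by rw [← Finset.mul_sum, hsub j]
    have lower : ∀ j, I t * (1 - n * ε) ≤ ∑ k, u t k * ((M ^ n) k j - ε) := by
      intro j
      calc I t * (1 - n * ε) = ∑ k, I t * ((M ^ n) k j - ε) := by
            rw [← Finset.mul_sum, hsub j]
        _ ≤ ∑ k, u t k * ((M ^ n) k j - ε) := by
            refine Finset.sum_le_sum fun k _ => ?_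
            exact mul_le_mul_of_nonneg_right (Finset.inf'_le (u t) (Finset.mem_univ k))
              (sub_nonneg.mpr (hεle k j))
    have e1 : S (t + n) = u (t + n) j0 := hj0
    have e2 : I (t + n) = u (t + n) l0 := hl0
    rw [e1, e2, key1 j0, key1 l0]
    have h1 := upper j0
    have h2 := lower l0
    simp only [hc]
    linarith
  -- geometric decay
  set D : ℕ → ℝ := fun t => S t - I t with hD
  have hD0 : ∀ t, 0 ≤ D t := fun t => sub_nonneg.mpr (hIS t)
  have geom : ∀ m, D (n * m) ≤ c ^ m * D 0 := by
    intro m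
    induction m with
    | zero => simp [hD]
    | succ m ih =>
      have : n * (m + 1) = n * m + n := by ring
      rw [this]
      calc D (n * m + n) ≤ c * D (n * m) := contr (n * m)
        _ ≤ c * (c ^ m * D 0) := by
            exact mul_le_mul_of_nonneg_left ih hc0
        _ = c ^ (m + 1) * D 0 := by ring
  set Linf : ℝ := ⨅ t, S t with hLinf
  set Lsup : ℝ := ⨆ t, I t with hLsup
  have hL1 : ∀ t, Linf ≤ S t := fun t => ciInf_le hSbdd t
  have hL2 : ∀ t, I t ≤ Lsup := fun t => le_ciSup hIbdd t
  have heq : Linf = Lsup := by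
    have hle1 : Linf ≤ Lsup := by
      have h1 : ∀ m, Linf - Lsup ≤ c ^ m * D 0 := by
        intro m
        calc Linf - Lsup ≤ S (n * m) - I (n * m) := sub_le_sub (hL1 _) (hL2 _)
          _ ≤ c ^ m * D 0 := geom m
      have h2 : Tendsto (fun m : ℕ => c ^ m * D 0) atTop (𝓝 0) := by
        simpa using (tendsto_pow_atTop_nhds_zero_of_lt_one hc0 hc1).mul_const (D 0)
      have := ge_of_tendsto' h2 h1
      linarith
    have hle2 : Lsup ≤ Linf := by
      refine ciSup_le fun t => le_ciInf fun t' => ?_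
      calc I t ≤ I (t + t') := hIa t t'
        _ ≤ S (t + t') := hIS _
        _ = S (t' + t) := by rw [Nat.add_comm]
        _ ≤ S t' := hSa t' t
    linarith
  refine ⟨Linf, ?_, ?_⟩
  · have h1 : ε ≤ I n := by
      refine Finset.le_inf' hne (u n) fun j _ => ?_
      exact hεle i j
    have h2 : I n ≤ Lsup := hL2 n
    rw [heq]
    linarith
  · intro j
    have hub' : ∀ t, u t j ≤ S t := fun t => Finset.le_sup' (u t) (Finset.mem_univ j)
    have hlb' : ∀ t, I t ≤ u t j := fun t => Finset.inf'_le (u t) (Finset.mem_univ j)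
    have hItend' : Tendsto I atTop (𝓝 Linf) := by rw [heq]; exact hItend
    exact tendsto_of_tendsto_of_tendsto_of_le_of_le hItend' hStend hlb' hub'

theorem stmt5 (n : ℕ) (hn : 1 ≤ n) (G : SimpleGraph (Fin n)) [DecidableRel G.Adj]
    (M : Matrix (Fin n) (Fin n) ℝ)
    (hM : ∀ i j, M i j =
      if i = j ∨ G.Adj i j then 1 / (1 + (G.degree j : ℝ)) else 0)
    (hG : G.Connected)
    (z0 w0 : Fin n → ℝ) (hw0 : ∑ j, w0 j ≠ 0) :
    ∀ i : Fin n, ∃ zi wi : ℝ,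
      Tendsto (fun t => ((M ^ t).mulVec z0) i) atTop (𝓝 zi) ∧
      Tendsto (fun t => ((M ^ t).mulVec w0) i) atTop (𝓝 wi) ∧
      wi ≠ 0 ∧ zi / wi = (∑ j, z0 j) / (∑ j, w0 j) := by
  have hdpos : ∀ j : Fin n, (0:ℝ) < 1 + (G.degree j : ℝ) := by
    intro j; positivity
  have hnn : ∀ i j, 0 ≤ M i j := by
    intro i j
    rw [hM]
    split
    · positivity
    · exact le_rfl
  have hcol : ∀ j, ∑ i, M i j = 1 := by
    intro j
    simp only [hM]
    rw [Finset.sum_ite, Finset.sum_const, Finset.sum_const]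
    have hfilt : Finset.univ.filter (fun i => i = j ∨ G.Adj i j)
        = insert j (G.neighborFinset j) := by
      ext i
      simp [SimpleGraph.mem_neighborFinset, G.adj_comm]
    rw [hfilt, Finset.card_insert_of_notMem (G.notMem_neighborFinset_self j),
      SimpleGraph.card_neighborFinset_eq_degree]
    have hd := hdpos j
    field_simp
    ring_nf; rw [← add_one_mul, add_comm, mul_inv_cancel₀ hd.ne']
  have hdiag : ∀ i, 0 < M i i := by
    intro i
    rw [hM]
    simp only [true_or, if_pos, eq_self_iff_true]
    have := hdpos i
    positivity
  have hadj : ∀ i j, G.Adj i j → 0 < M i j := by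
    intro i j h
    rw [hM, if_pos (Or.inr h)]
    have := hdpos j
    positivity
  have hpos : ∀ i j, 0 < (M ^ n) i j := by
    intro i j
    have hr : G.Reachable i j := hG.preconnected i j
    obtain ⟨w⟩ := hr
    have hp : (w.toPath : G.Walk i j).length < n := by
      have := w.toPath.2.length_lt
      simpa using this
    exact pow_entry_pos n M hnn G hdiag hadj n i j w.toPath (le_of_lt hp)
  intro i
  obtain ⟨p, hp, htend⟩ := key_conv n hn M hnn hcol hpos i
  have hmv : ∀ (v : Fin n → ℝ) t, ((M ^ t).mulVec v) i = ∑ j, (M ^ t) i j * v j := by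
    intro v t
    simp [Matrix.mulVec, dotProduct]
  have hten : ∀ v : Fin n → ℝ,
      Tendsto (fun t => ((M ^ t).mulVec v) i) atTop (𝓝 (p * ∑ j, v j)) := by
    intro v
    have h1 : Tendsto (fun t => ∑ j, (M ^ t) i j * v j) atTop (𝓝 (∑ j, p * v j)) :=
      tendsto_finset_sum _ fun j _ => (htend j).mul_const (v j)
    rw [Finset.mul_sum]
    simpa only [hmv] using h1
  refine ⟨p * ∑ j, z0 j, p * ∑ j, w0 j, hten z0, hten w0,
    mul_ne_zero hp.ne' hw0, ?_⟩
  rw [mul_div_mul_left _ _ hp.ne']
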